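/- If ρ^N(r; z) = 0 for some r > 0 at z = (x,y) ∈ X × Y, where b = (Gᵀy − c, h − Gx) and ρ^N(r;z) := (1/r)·sup{⟨b, ẑ − z⟩ : ẑ ∈ X × Y, ‖ẑ − z‖_N ≤ r}, then z is a saddle point of L(x,y) = ⟨c,x⟩ − ⟨y, Gx − h⟩ over X × Y. -/

import Mathlib

open Finset

/-- If the normalized duality gap ρ^N(r; z) = 0 for some r > 0 at
z = (x,y) ∈ X × Y, where b = (Gᵀy − c, h − Gx) and N is positive definite
diagonal, then z is a saddle point of L(x,y) = ⟨c,x⟩ − ⟨y, Gx − h⟩ over X × Y: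
L(x, ŷ) ≤ L(x̂, y) for all x̂ ∈ X, ŷ ∈ Y. -/
theorem stmt11 {n m : ℕ}
    (X : Set (EuclideanSpace ℝ (Fin n))) (Y : Set (EuclideanSpace ℝ (Fin m)))
    (hXne : X.Nonempty) (hXclosed : IsClosed X) (hXconvex : Convex ℝ X)
    (hYne : Y.Nonempty) (hYclosed : IsClosed Y) (hYconvex : Convex ℝ Y)
    (G : EuclideanSpace ℝ (Fin n) →L[ℝ] EuclideanSpace ℝ (Fin m))
    (c : EuclideanSpace ℝ (Fin n)) (h : EuclideanSpace ℝ (Fin m))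
    (x : EuclideanSpace ℝ (Fin n)) (y : EuclideanSpace ℝ (Fin m))
    (hx : x ∈ X) (hy : y ∈ Y)
    (d₁ : Fin n → ℝ) (d₂ : Fin m → ℝ) (hd₁ : ∀ i, 0 < d₁ i) (hd₂ : ∀ j, 0 < d₂ j)
    (r : ℝ) (hr : 0 < r)
    (hρ : (1 / r) * sSup ((fun zh :
          EuclideanSpace ℝ (Fin n) × EuclideanSpace ℝ (Fin m) =>
        (inner ℝ ((ContinuousLinearMap.adjoint G) y - c) (zh.1 - x) : ℝ)
          + (inner ℝ (h - G x) (zh.2 - y) : ℝ)) ''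
        {zh | zh.1 ∈ X ∧ zh.2 ∈ Y ∧
          Real.sqrt (∑ i, d₁ i * ((zh.1 - x) i) ^ 2
            + ∑ j, d₂ j * ((zh.2 - y) j) ^ 2) ≤ r}) = 0) :
    ∀ x' ∈ X, ∀ y' ∈ Y,
      (inner ℝ c x : ℝ) - (inner ℝ y' (G x - h) : ℝ)
        ≤ (inner ℝ c x' : ℝ) - (inner ℝ y (G x' - h) : ℝ) := by
  classical
  intro x' hx' y' hy'
  set f : EuclideanSpace ℝ (Fin n) × EuclideanSpace ℝ (Fin m) → ℝ :=
    fun zh => (inner ℝ ((ContinuousLinearMap.adjoint G) y - c) (zh.1 - x) : ℝ)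
      + (inner ℝ (h - G x) (zh.2 - y) : ℝ) with hf
  set K : Set (EuclideanSpace ℝ (Fin n) × EuclideanSpace ℝ (Fin m)) :=
    {zh | zh.1 ∈ X ∧ zh.2 ∈ Y ∧
      Real.sqrt (∑ i, d₁ i * ((zh.1 - x) i) ^ 2
        + ∑ j, d₂ j * ((zh.2 - y) j) ^ 2) ≤ r} with hK
  have hr' : (1:ℝ)/r ≠ 0 := by positivity
  have hsup : sSup (f '' K) = 0 := (mul_eq_zero.mp hρ).resolve_left hr'
  set b₁ : EuclideanSpace ℝ (Fin n) := (ContinuousLinearMap.adjoint G) y - c with hb₁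
  set b₂ : EuclideanSpace ℝ (Fin m) := h - G x with hb₂
  set C : ℝ := (∑ i, |b₁ i| * (r / Real.sqrt (d₁ i)))
    + (∑ j, |b₂ j| * (r / Real.sqrt (d₂ j))) with hC
  have hbdd : BddAbove (f '' K) := by
    refine ⟨C, ?_⟩
    rintro _ ⟨zh, hzh, rfl⟩
    obtain ⟨hz1, hz2, hzn⟩ := hzh
    have hA : ∀ i : Fin n, (0:ℝ) ≤ d₁ i * ((zh.1 - x) i) ^ 2 :=
      fun i => mul_nonneg (hd₁ i).le (sq_nonneg _)
    have hB : ∀ j : Fin m, (0:ℝ) ≤ d₂ j * ((zh.2 - y) j) ^ 2 :=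
      fun j => mul_nonneg (hd₂ j).le (sq_nonneg _)
    have hsumle : (∑ i, d₁ i * ((zh.1 - x) i) ^ 2)
        + (∑ j, d₂ j * ((zh.2 - y) j) ^ 2) ≤ r ^ 2 :=
      (Real.sqrt_le_left hr.le).mp hzn
    have hAnn : (0:ℝ) ≤ ∑ i, d₁ i * ((zh.1 - x) i) ^ 2 :=
      Finset.sum_nonneg fun i _ => hA i
    have hBnn : (0:ℝ) ≤ ∑ j, d₂ j * ((zh.2 - y) j) ^ 2 :=
      Finset.sum_nonneg fun j _ => hB j
    have hcoord1 : ∀ i, |(zh.1 - x) i| ≤ r / Real.sqrt (d₁ i) := by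
      intro i
      have h1 : d₁ i * ((zh.1 - x) i) ^ 2 ≤ r ^ 2 := by
        have := Finset.single_le_sum (fun i _ => hA i) (Finset.mem_univ i)
        linarith
      have h2 : ((zh.1 - x) i) ^ 2 ≤ r ^ 2 / d₁ i := by
        rw [le_div_iff₀ (hd₁ i)]; linarith [h1]
      calc |(zh.1 - x) i| = Real.sqrt (((zh.1 - x) i) ^ 2) := (Real.sqrt_sq_eq_abs _).symm
        _ ≤ Real.sqrt (r ^ 2 / d₁ i) := Real.sqrt_le_sqrt h2
        _ = r / Real.sqrt (d₁ i) := by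
            rw [Real.sqrt_div (sq_nonneg r), Real.sqrt_sq hr.le]
    have hcoord2 : ∀ j, |(zh.2 - y) j| ≤ r / Real.sqrt (d₂ j) := by
      intro j
      have h1 : d₂ j * ((zh.2 - y) j) ^ 2 ≤ r ^ 2 := by
        have := Finset.single_le_sum (fun j _ => hB j) (Finset.mem_univ j)
        linarith
      have h2 : ((zh.2 - y) j) ^ 2 ≤ r ^ 2 / d₂ j := by
        rw [le_div_iff₀ (hd₂ j)]; linarith [h1]
      calc |(zh.2 - y) j| = Real.sqrt (((zh.2 - y) j) ^ 2) := (Real.sqrt_sq_eq_abs _).symm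
        _ ≤ Real.sqrt (r ^ 2 / d₂ j) := Real.sqrt_le_sqrt h2
        _ = r / Real.sqrt (d₂ j) := by
            rw [Real.sqrt_div (sq_nonneg r), Real.sqrt_sq hr.le]
    have hfz : f zh = (∑ i, b₁ i * (zh.1 - x) i) + (∑ j, b₂ j * (zh.2 - y) j) := by
      simp [hf, PiLp.inner_apply, RCLike.inner_apply, conj_trivial, mul_comm]
    rw [hfz, hC]
    have hs1 : (∑ i, b₁ i * (zh.1 - x) i) ≤ ∑ i, |b₁ i| * (r / Real.sqrt (d₁ i)) :=
      Finset.sum_le_sum fun i _ => by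
        calc b₁ i * (zh.1 - x) i ≤ |b₁ i * (zh.1 - x) i| := le_abs_self _
          _ = |b₁ i| * |(zh.1 - x) i| := abs_mul _ _
          _ ≤ |b₁ i| * (r / Real.sqrt (d₁ i)) :=
              mul_le_mul_of_nonneg_left (hcoord1 i) (abs_nonneg _)
    have hs2 : (∑ j, b₂ j * (zh.2 - y) j) ≤ ∑ j, |b₂ j| * (r / Real.sqrt (d₂ j)) :=
      Finset.sum_le_sum fun j _ => by
        calc b₂ j * (zh.2 - y) j ≤ |b₂ j * (zh.2 - y) j| := le_abs_self _
          _ = |b₂ j| * |(zh.2 - y) j| := abs_mul _ _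
          _ ≤ |b₂ j| * (r / Real.sqrt (d₂ j)) :=
              mul_le_mul_of_nonneg_left (hcoord2 j) (abs_nonneg _)
    linarith
  have hle0 : ∀ zh ∈ K, f zh ≤ 0 := fun zh hzh =>
    hsup ▸ le_csSup hbdd ⟨zh, hzh, rfl⟩
  -- scaling argument
  set u : EuclideanSpace ℝ (Fin n) := x' - x with hu
  set v : EuclideanSpace ℝ (Fin m) := y' - y with hv
  set W : ℝ := Real.sqrt (∑ i, d₁ i * (u i) ^ 2 + ∑ j, d₂ j * (v j) ^ 2) with hW
  have hWnn : 0 ≤ W := Real.sqrt_nonneg _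
  set t : ℝ := r / (W + r) with ht
  have ht0 : 0 < t := by positivity
  have ht1 : t ≤ 1 := by
    rw [ht, div_le_one (by linarith)]; linarith
  set p : EuclideanSpace ℝ (Fin n) × EuclideanSpace ℝ (Fin m) :=
    (x + t • (x' - x), y + t • (y' - y)) with hp
  have hp1 : p.1 - x = t • u := by simp [hp, hu]
  have hp2 : p.2 - y = t • v := by simp [hp, hv]
  have hpK : p ∈ K := by
    refine ⟨hXconvex.add_smul_sub_mem hx hx' ⟨ht0.le, ht1⟩,
      hYconvex.add_smul_sub_mem hy hy' ⟨ht0.le, ht1⟩, ?_⟩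
    have e1 : ∀ i, (p.1 - x) i = t * u i := by intro i; rw [hp1]; simp
    have e2 : ∀ j, (p.2 - y) j = t * v j := by intro j; rw [hp2]; simp
    have : (∑ i, d₁ i * ((p.1 - x) i) ^ 2 + ∑ j, d₂ j * ((p.2 - y) j) ^ 2)
        = t ^ 2 * (∑ i, d₁ i * (u i) ^ 2 + ∑ j, d₂ j * (v j) ^ 2) := by
      simp only [e1, e2]; rw [mul_add, Finset.mul_sum, Finset.mul_sum]
      congr 1 <;> exact Finset.sum_congr rfl fun _ _ => by ring
    rw [this, Real.sqrt_mul (sq_nonneg t), Real.sqrt_sq ht0.le, ← hW]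
    calc t * W = r * W / (W + r) := by rw [ht]; ring
      _ ≤ r := by
          rw [div_le_iff₀ (by linarith)]
          nlinarith
  have hfp : f p = t * ((inner ℝ b₁ u : ℝ) + (inner ℝ b₂ v : ℝ)) := by
    rw [hf]; simp only [hp1, hp2, real_inner_smul_right]; ring
  have hkey : (inner ℝ b₁ u : ℝ) + (inner ℝ b₂ v : ℝ) ≤ 0 := by
    have := hle0 p hpK
    rw [hfp] at this
    nlinarith
  -- unfold
  rw [hb₁, hb₂, hu, hv] at hkey
  simp only [inner_sub_left, inner_sub_right, ContinuousLinearMap.adjoint_inner_left,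
    map_sub] at hkey ⊢
  have e1 : (inner ℝ h y' : ℝ) = inner ℝ y' h := real_inner_comm _ _
  have e2 : (inner ℝ h y : ℝ) = inner ℝ y h := real_inner_comm _ _
  have e3 : (inner ℝ (G x) y' : ℝ) = inner ℝ y' (G x) := real_inner_comm _ _
  have e4 : (inner ℝ (G x) y : ℝ) = inner ℝ y (G x) := real_inner_comm _ _
  linarith [hkey]
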